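/- Let τ0 > 0 and for (d,v) ∈ ℝ² write Z = d + τ0·v. Let D ⊂ ℝ² be a bounded Lebesgue-measurable set, D0 = D ∩ {Z ≥ 0}, D1 = D ∩ {Z < 0}, and let u : ℝ² → ℝ be Lebesgue integrable on D with u(d,v) > 0 for all (d,v) ∈ D. Then for every fixed σ > 0 the map λ ↦ U(λ,σ) is twice differentiable on ℝ and ∂²U/∂λ² = (1/(√(2π)·σ³)) · ∬_{D} u(d,v) · exp(−(Z−λ)²/(2σ²)) · |Z| dd dv − (λ/σ²) · ∂U/∂λ. -/

import Mathlib

open MeasureTheory Real Filter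

/-- The Gaussian Q-function `Q(x) = (1/√(2π)) ∫_x^∞ exp(−t²/2) dt`. -/
noncomputable def Qfun (x : ℝ) : ℝ :=
  (Real.sqrt (2 * Real.pi))⁻¹ * ∫ t in Set.Ioi x, Real.exp (-t ^ 2 / 2)

/-- The wrong-decision probability `P_w(d,v;λ,σ)`. -/
noncomputable def Pw (τ0 σ lam : ℝ) (p : ℝ × ℝ) : ℝ :=
  if 0 ≤ p.1 + τ0 * p.2 then Qfun ((p.1 + τ0 * p.2 - lam) / σ)
  else Qfun (-(p.1 + τ0 * p.2 - lam) / σ)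

/-- The total wrong decision loss `U(λ,σ) = ∬_D u(d,v) P_w(d,v;λ,σ) dd dv`. -/
noncomputable def Uloss (τ0 : ℝ) (D : Set (ℝ × ℝ)) (u : ℝ × ℝ → ℝ) (lam σ : ℝ) : ℝ :=
  ∫ p in D, u p * Pw τ0 σ lam p



lemma integrable_gauss_one : Integrable (fun t : ℝ => Real.exp (-t ^ 2 / 2)) := by
  have h := integrable_exp_neg_mul_sq (by norm_num : (0:ℝ) < 1/2)
  have he : (fun t : ℝ => Real.exp (-t ^ 2 / 2)) = fun t : ℝ => Real.exp (-(1/2:ℝ) * t ^ 2) := by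
    funext t; ring_nf
  rw [he]; exact h

lemma qfun_hasDerivAt (x : ℝ) :
    HasDerivAt Qfun (-((Real.sqrt (2 * Real.pi))⁻¹ * Real.exp (-x ^ 2 / 2))) x := by
  have hint := integrable_gauss_one
  have hrepr : ∀ y : ℝ, Qfun y =
      (Real.sqrt (2 * Real.pi))⁻¹ *
        (((∫ t : ℝ, Real.exp (-t ^ 2 / 2)) - ∫ t in Set.Iic (0:ℝ), Real.exp (-t ^ 2 / 2)) -
          ∫ t in (0:ℝ)..y, Real.exp (-t ^ 2 / 2)) := by
    intro y
    unfold Qfun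
    congr 1
    have h1 := intervalIntegral.integral_Iic_add_Ioi (b := y) hint.integrableOn hint.integrableOn
    have h2 := intervalIntegral.integral_Iic_sub_Iic (a := (0:ℝ)) (b := y)
      hint.integrableOn hint.integrableOn
    linarith
  have hcont : Continuous (fun t : ℝ => Real.exp (-t ^ 2 / 2)) := by continuity
  have hd : HasDerivAt (fun y => ∫ t in (0:ℝ)..y, Real.exp (-t ^ 2 / 2))
      (Real.exp (-x ^ 2 / 2)) x :=
    intervalIntegral.integral_hasDerivAt_right hint.intervalIntegrable
      hcont.aestronglyMeasurable.stronglyMeasurableAtFilter hcont.continuousAt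
  have hd2 := ((hd.const_sub ((∫ t : ℝ, Real.exp (-t ^ 2 / 2)) -
      ∫ t in Set.Iic (0:ℝ), Real.exp (-t ^ 2 / 2))).const_mul
      (Real.sqrt (2 * Real.pi))⁻¹)
  have : Qfun = fun y => (Real.sqrt (2 * Real.pi))⁻¹ *
      (((∫ t : ℝ, Real.exp (-t ^ 2 / 2)) - ∫ t in Set.Iic (0:ℝ), Real.exp (-t ^ 2 / 2)) -
        ∫ t in (0:ℝ)..y, Real.exp (-t ^ 2 / 2)) := funext hrepr
  rw [this]
  refine hd2.congr_deriv ?_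
  ring

lemma qfun_continuous : Continuous Qfun :=
  Differentiable.continuous (fun x => (qfun_hasDerivAt x).differentiableAt)

lemma abs_qfun_le (x : ℝ) : |Qfun x| ≤ 1 := by
  have hint := integrable_gauss_one
  have hs : (0:ℝ) < Real.sqrt (2 * Real.pi) :=
    Real.sqrt_pos.2 (by positivity)
  have h0 : 0 ≤ Qfun x :=
    mul_nonneg (inv_nonneg.2 hs.le)
      (setIntegral_nonneg measurableSet_Ioi fun t _ => (Real.exp_pos _).le)
  have h1 : (∫ t in Set.Ioi x, Real.exp (-t ^ 2 / 2)) ≤ ∫ t : ℝ, Real.exp (-t ^ 2 / 2) :=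
    setIntegral_le_integral hint (ae_of_all _ fun t => (Real.exp_pos _).le)
  have h2 : (∫ t : ℝ, Real.exp (-t ^ 2 / 2)) = Real.sqrt (2 * Real.pi) := by
    have he : (fun t : ℝ => Real.exp (-t ^ 2 / 2)) = fun t : ℝ => Real.exp (-(1/2:ℝ) * t ^ 2) := by
      funext t; ring_nf
    rw [he, integral_gaussian]
    rw [show (Real.pi / (1/2)) = 2 * Real.pi by ring]
  rw [abs_of_nonneg h0]
  unfold Qfun
  calc (Real.sqrt (2 * Real.pi))⁻¹ * ∫ t in Set.Ioi x, Real.exp (-t ^ 2 / 2)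
      ≤ (Real.sqrt (2 * Real.pi))⁻¹ * Real.sqrt (2 * Real.pi) := by
        apply mul_le_mul_of_nonneg_left _ (inv_nonneg.2 hs.le)
        rw [← h2]; exact h1
    _ = 1 := inv_mul_cancel₀ hs.ne'

/-- sign of Z -/
noncomputable def sgnZ (τ0 : ℝ) (p : ℝ × ℝ) : ℝ := if 0 ≤ p.1 + τ0 * p.2 then 1 else -1

noncomputable def Pw' (τ0 σ : ℝ) (l : ℝ) (p : ℝ × ℝ) : ℝ :=
  sgnZ τ0 p * ((Real.sqrt (2 * Real.pi) * σ)⁻¹ *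
    Real.exp (-(p.1 + τ0 * p.2 - l) ^ 2 / (2 * σ ^ 2)))

lemma pw_def (τ0 σ lam : ℝ) (p : ℝ × ℝ) :
    Pw τ0 σ lam p = Qfun (sgnZ τ0 p * (p.1 + τ0 * p.2 - lam) / σ) := by
  unfold Pw sgnZ
  by_cases h : 0 ≤ p.1 + τ0 * p.2 <;> simp [h, neg_div]

lemma pw_hasDerivAt (τ0 σ : ℝ) (hσ : 0 < σ) (p : ℝ × ℝ) (l : ℝ) :
    HasDerivAt (fun l => Pw τ0 σ l p) (Pw' τ0 σ l p) l := by
  set Z := p.1 + τ0 * p.2 with hZ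
  set s := sgnZ τ0 p with hs
  have hss : s = 1 ∨ s = -1 := by
    unfold sgnZ at hs
    by_cases h : 0 ≤ Z
    · left; rw [hs, if_pos h]
    · right; rw [hs, if_neg h]
  have hinner : HasDerivAt (fun l : ℝ => s * (Z - l) / σ) (-s / σ) l := by
    have : HasDerivAt (fun l : ℝ => s * (Z - l)) (-s) l := by
      simpa using (((hasDerivAt_id l).const_sub Z).const_mul s)
    simpa using this.div_const σ
  have hq := (qfun_hasDerivAt (s * (Z - l) / σ)).comp l hinner
  have hfun : (fun l => Pw τ0 σ l p) = fun l => Qfun (s * (Z - l) / σ) := by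
    funext y; rw [pw_def]
  rw [hfun]
  refine hq.congr_deriv ?_
  unfold Pw'
  rw [← hs, ← hZ]
  have hsq : s ^ 2 = 1 := by rcases hss with h | h <;> rw [h] <;> norm_num
  have hexp : (s * (Z - l) / σ) ^ 2 = (Z - l) ^ 2 / σ ^ 2 := by
    rw [div_pow, mul_pow, hsq, one_mul]
  have h3 : -(s * (Z - l) / σ) ^ 2 / 2 = -(Z - l) ^ 2 / (2 * σ ^ 2) := by
    rw [hexp]; ring
  rw [h3, mul_inv]
  ring

noncomputable def Pw'' (τ0 σ : ℝ) (l : ℝ) (p : ℝ × ℝ) : ℝ :=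
  sgnZ τ0 p * ((Real.sqrt (2 * Real.pi) * σ)⁻¹ *
    Real.exp (-(p.1 + τ0 * p.2 - l) ^ 2 / (2 * σ ^ 2)) * ((p.1 + τ0 * p.2 - l) / σ ^ 2))

lemma pw'_hasDerivAt (τ0 σ : ℝ) (hσ : 0 < σ) (p : ℝ × ℝ) (l : ℝ) :
    HasDerivAt (fun l => Pw' τ0 σ l p) (Pw'' τ0 σ l p) l := by
  set Z := p.1 + τ0 * p.2 with hZ
  have hg : HasDerivAt (fun l : ℝ => -(Z - l) ^ 2 / (2 * σ ^ 2)) ((Z - l) / σ ^ 2) l := by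
    have h1 : HasDerivAt (fun l : ℝ => Z - l) (-1) l := by
      simpa using (hasDerivAt_id l).const_sub Z
    have h2 := ((h1.pow 2).neg).div_const (2 * σ ^ 2)
    refine h2.congr_deriv ?_
    field_simp
    ring
  have he := hg.exp
  have := (he.const_mul (Real.sqrt (2 * Real.pi) * σ)⁻¹).const_mul (sgnZ τ0 p)
  unfold Pw' Pw''
  refine this.congr_deriv ?_
  ring

lemma measurable_Zfun (τ0 : ℝ) : Measurable (fun p : ℝ × ℝ => p.1 + τ0 * p.2) :=
  measurable_fst.add (measurable_const.mul measurable_snd)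

lemma measurable_sgnZ (τ0 : ℝ) : Measurable (sgnZ τ0) :=
  Measurable.ite (measurableSet_le measurable_const (measurable_Zfun τ0))
    measurable_const measurable_const

lemma abs_sgnZ (τ0 : ℝ) (p : ℝ × ℝ) : |sgnZ τ0 p| = 1 := by
  unfold sgnZ; by_cases h : 0 ≤ p.1 + τ0 * p.2 <;> simp [h]

lemma measurable_pw (τ0 σ l : ℝ) : Measurable (fun p => Pw τ0 σ l p) := by
  unfold Pw
  exact Measurable.ite (measurableSet_le measurable_const (measurable_Zfun τ0))
    (qfun_continuous.measurable.comp
      (((measurable_Zfun τ0).sub measurable_const).div_const σ))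
    (qfun_continuous.measurable.comp
      ((((measurable_Zfun τ0).sub measurable_const).neg).div_const σ))

lemma measurable_expfac (τ0 σ l : ℝ) :
    Measurable (fun p : ℝ × ℝ => Real.exp (-(p.1 + τ0 * p.2 - l) ^ 2 / (2 * σ ^ 2))) :=
  Real.measurable_exp.comp
    (((((measurable_Zfun τ0).sub measurable_const).pow_const 2).neg).div_const _)

lemma measurable_pw' (τ0 σ l : ℝ) : Measurable (fun p => Pw' τ0 σ l p) := by
  unfold Pw'
  exact (measurable_sgnZ τ0).mul ((measurable_expfac τ0 σ l).const_mul _)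

lemma measurable_pw'' (τ0 σ l : ℝ) : Measurable (fun p => Pw'' τ0 σ l p) := by
  unfold Pw''
  exact (measurable_sgnZ τ0).mul
    (((measurable_expfac τ0 σ l).const_mul _).mul
      (((measurable_Zfun τ0).sub measurable_const).div_const _))

lemma abs_pw'_le (τ0 σ l : ℝ) (hσ : 0 < σ) (p : ℝ × ℝ) :
    |Pw' τ0 σ l p| ≤ (Real.sqrt (2 * Real.pi) * σ)⁻¹ := by
  unfold Pw'
  rw [abs_mul, abs_sgnZ, one_mul, abs_mul]
  have h1 : |(Real.sqrt (2 * Real.pi) * σ)⁻¹| = (Real.sqrt (2 * Real.pi) * σ)⁻¹ := by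
    rw [abs_of_nonneg]; positivity
  have h2 : |Real.exp (-(p.1 + τ0 * p.2 - l) ^ 2 / (2 * σ ^ 2))| ≤ 1 := by
    rw [abs_of_nonneg (Real.exp_pos _).le]
    apply Real.exp_le_one_iff.2
    have : (0:ℝ) < 2 * σ ^ 2 := by positivity
    apply div_nonpos_of_nonpos_of_nonneg
    · simp [sq_nonneg]
    · positivity
  rw [h1]
  calc (Real.sqrt (2 * Real.pi) * σ)⁻¹ * |Real.exp (-(p.1 + τ0 * p.2 - l) ^ 2 / (2 * σ ^ 2))|
      ≤ (Real.sqrt (2 * Real.pi) * σ)⁻¹ * 1 := by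
        apply mul_le_mul_of_nonneg_left h2; positivity
    _ = _ := mul_one _

lemma pw''_split (τ0 σ : ℝ) (hσ : 0 < σ) (lam : ℝ) (p : ℝ × ℝ) :
    Pw'' τ0 σ lam p =
      (Real.sqrt (2 * Real.pi) * σ ^ 3)⁻¹ *
        (Real.exp (-(p.1 + τ0 * p.2 - lam) ^ 2 / (2 * σ ^ 2)) * |p.1 + τ0 * p.2|) -
      (lam / σ ^ 2) * Pw' τ0 σ lam p := by
  unfold Pw'' Pw' sgnZ
  have hs : Real.sqrt (2 * Real.pi) ≠ 0 := by positivity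
  by_cases h : 0 ≤ p.1 + τ0 * p.2
  · rw [if_pos h, abs_of_nonneg h]
    field_simp
  · rw [if_neg h, abs_of_neg (lt_of_not_ge h)]
    field_simp
    ring

theorem stmt1 (τ0 : ℝ) (hτ0 : 0 < τ0) (D : Set (ℝ × ℝ)) (hDmeas : MeasurableSet D)
    (hDbdd : Bornology.IsBounded D) (u : ℝ × ℝ → ℝ)
    (hu_int : IntegrableOn u D volume)
    (hu_pos : ∀ p ∈ D, 0 < u p)
    (σ : ℝ) (hσ : 0 < σ) :
    Differentiable ℝ (fun l => Uloss τ0 D u l σ) ∧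
    Differentiable ℝ (deriv (fun l => Uloss τ0 D u l σ)) ∧
    ∀ lam : ℝ,
      deriv (deriv (fun l => Uloss τ0 D u l σ)) lam =
        (Real.sqrt (2 * Real.pi) * σ ^ 3)⁻¹ *
          (∫ p in D, u p * Real.exp (-(p.1 + τ0 * p.2 - lam) ^ 2 / (2 * σ ^ 2)) *
            |p.1 + τ0 * p.2|) -
        (lam / σ ^ 2) * deriv (fun l => Uloss τ0 D u l σ) lam := by
  -- bound on Z over D
  obtain ⟨R, hR⟩ : ∃ R : ℝ, ∀ p ∈ D, |p.1 + τ0 * p.2| ≤ R := by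
    obtain ⟨r, hr⟩ := hDbdd.subset_closedBall (0 : ℝ × ℝ)
    refine ⟨(1 + τ0) * r, fun p hp => ?_⟩
    have hpr : ‖p‖ ≤ r := by simpa [Metric.mem_closedBall] using hr hp
    have h1 : |p.1| ≤ ‖p‖ := norm_fst_le p
    have h2 : |p.2| ≤ ‖p‖ := norm_snd_le p
    calc |p.1 + τ0 * p.2| ≤ |p.1| + τ0 * |p.2| := by
          refine (abs_add_le _ _).trans ?_
          rw [abs_mul, abs_of_pos hτ0]
        _ ≤ ‖p‖ + τ0 * ‖p‖ := by nlinarith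
        _ = (1 + τ0) * ‖p‖ := by ring
        _ ≤ (1 + τ0) * r := by nlinarith
  have hu_meas : AEStronglyMeasurable u (volume.restrict D) := hu_int.aestronglyMeasurable
  set c : ℝ := (Real.sqrt (2 * Real.pi) * σ)⁻¹ with hc
  have hc0 : 0 ≤ c := by positivity
  -- Step A: first derivative
  have stepA : ∀ lam : ℝ,
      Integrable (fun p => u p * Pw' τ0 σ lam p) (volume.restrict D) ∧
      HasDerivAt (fun l => Uloss τ0 D u l σ) (∫ p in D, u p * Pw' τ0 σ lam p) lam := by
    intro lam
    have key := hasDerivAt_integral_of_dominated_loc_of_deriv_le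
      (μ := volume.restrict D) (x₀ := lam)
      (F := fun l p => u p * Pw τ0 σ l p) (F' := fun l p => u p * Pw' τ0 σ l p)
      (bound := fun p => ‖u p‖ * c) (Metric.ball_mem_nhds lam one_pos)
      (Filter.Eventually.of_forall fun l =>
        hu_meas.mul (measurable_pw τ0 σ l).aestronglyMeasurable)
      (by
        apply Integrable.mono' hu_int.norm
          (hu_meas.mul (measurable_pw τ0 σ lam).aestronglyMeasurable)
        refine ae_of_all _ fun p => ?_
        simp only [Pi.mul_apply, norm_mul]
        have h1 : ‖Pw τ0 σ lam p‖ ≤ 1 := by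
          rw [Real.norm_eq_abs, pw_def]; exact abs_qfun_le _
        calc ‖u p‖ * ‖Pw τ0 σ lam p‖ ≤ ‖u p‖ * 1 :=
              mul_le_mul_of_nonneg_left h1 (norm_nonneg _)
          _ = ‖u p‖ := mul_one _)
      (hu_meas.mul (measurable_pw' τ0 σ lam).aestronglyMeasurable)
      (ae_of_all _ fun p l _ => by
        rw [Real.norm_eq_abs, abs_mul]
        exact mul_le_mul_of_nonneg_left (abs_pw'_le τ0 σ l hσ p) (abs_nonneg _))
      (hu_int.norm.mul_const c)
      (ae_of_all _ fun p l _ => (pw_hasDerivAt τ0 σ hσ p l).const_mul (u p))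
    exact ⟨key.1, key.2⟩
  have hd1 : ∀ lam : ℝ, HasDerivAt (fun l => Uloss τ0 D u l σ)
      (∫ p in D, u p * Pw' τ0 σ lam p) lam := fun lam => (stepA lam).2
  have hU' : deriv (fun l => Uloss τ0 D u l σ) =
      fun lam => ∫ p in D, u p * Pw' τ0 σ lam p := funext fun lam => (hd1 lam).deriv
  -- Step B: second derivative
  have stepB : ∀ lam : ℝ,
      HasDerivAt (fun l => ∫ p in D, u p * Pw' τ0 σ l p)
        (∫ p in D, u p * Pw'' τ0 σ lam p) lam := by
    intro lam
    have key := hasDerivAt_integral_of_dominated_loc_of_deriv_le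
      (μ := volume.restrict D) (x₀ := lam)
      (F := fun l p => u p * Pw' τ0 σ l p) (F' := fun l p => u p * Pw'' τ0 σ l p)
      (bound := fun p => ‖u p‖ * (c * ((R + |lam| + 1) / σ ^ 2))) (Metric.ball_mem_nhds lam one_pos)
      (Filter.Eventually.of_forall fun l =>
        hu_meas.mul (measurable_pw' τ0 σ l).aestronglyMeasurable)
      ((stepA lam).1)
      (hu_meas.mul (measurable_pw'' τ0 σ lam).aestronglyMeasurable)
      (by
        rw [ae_restrict_iff' hDmeas]
        refine ae_of_all _ fun p hp l hl => ?_
        rw [Real.norm_eq_abs, abs_mul]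
        refine mul_le_mul_of_nonneg_left ?_ (abs_nonneg _)
        unfold Pw''
        rw [abs_mul, abs_sgnZ, one_mul, abs_mul, abs_mul]
        have he : |Real.exp (-(p.1 + τ0 * p.2 - l) ^ 2 / (2 * σ ^ 2))| ≤ 1 := by
          rw [abs_of_nonneg (Real.exp_pos _).le]
          apply Real.exp_le_one_iff.2
          apply div_nonpos_of_nonpos_of_nonneg
          · simp [sq_nonneg]
          · positivity
        have hzl : |(p.1 + τ0 * p.2 - l) / σ ^ 2| ≤ (R + |lam| + 1) / σ ^ 2 := by
          rw [abs_div, abs_of_nonneg (by positivity : (0:ℝ) ≤ σ ^ 2)]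
          apply div_le_div_of_nonneg_right _ (by positivity)
          have hll : |l - lam| < 1 := by
            simpa [Real.dist_eq] using Metric.mem_ball.1 hl
          calc |p.1 + τ0 * p.2 - l| = |(p.1 + τ0 * p.2) + (-lam) + (lam - l)| := by
                ring_nf
            _ ≤ |p.1 + τ0 * p.2| + |lam| + |lam - l| := by
                refine (abs_add_le _ _).trans ?_
                have := abs_add_le (p.1 + τ0 * p.2) (-lam)
                simp only [abs_neg] at this
                linarith [abs_nonneg (lam - l)]
            _ ≤ R + |lam| + 1 := by
                have := hR p hp
                rw [abs_sub_comm] at hll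
                linarith
        have hce : |c| = c := abs_of_nonneg hc0
        rw [hce]
        calc c * |Real.exp (-(p.1 + τ0 * p.2 - l) ^ 2 / (2 * σ ^ 2))| *
              |(p.1 + τ0 * p.2 - l) / σ ^ 2|
            ≤ c * 1 * ((R + |lam| + 1) / σ ^ 2) := by
              apply mul_le_mul
              · exact mul_le_mul_of_nonneg_left he hc0
              · exact hzl
              · exact abs_nonneg _
              · positivity
          _ = c * ((R + |lam| + 1) / σ ^ 2) := by ring)
      (hu_int.norm.mul_const _)
      (ae_of_all _ fun p l _ => (pw'_hasDerivAt τ0 σ hσ p l).const_mul (u p))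
    exact key.2
  have hd2 : ∀ lam : ℝ, HasDerivAt (deriv (fun l => Uloss τ0 D u l σ))
      (∫ p in D, u p * Pw'' τ0 σ lam p) lam := by
    intro lam; rw [hU']; exact stepB lam
  refine ⟨fun lam => (hd1 lam).differentiableAt, fun lam => (hd2 lam).differentiableAt,
    fun lam => ?_⟩
  rw [(hd2 lam).deriv, hU']
  -- algebraic identity
  have hint1 : Integrable (fun p => u p *
      Real.exp (-(p.1 + τ0 * p.2 - lam) ^ 2 / (2 * σ ^ 2)) * |p.1 + τ0 * p.2|)
      (volume.restrict D) := by
    apply Integrable.mono' (hu_int.norm.mul_const (max R 0))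
      ((hu_meas.mul (measurable_expfac τ0 σ lam).aestronglyMeasurable).mul
        ((measurable_Zfun τ0).abs.aestronglyMeasurable))
    rw [ae_restrict_iff' hDmeas]
    refine ae_of_all _ fun p hp => ?_
    simp only [Pi.mul_apply, Real.norm_eq_abs]
    rw [abs_mul, abs_mul, abs_abs]
    have he : |Real.exp (-(p.1 + τ0 * p.2 - lam) ^ 2 / (2 * σ ^ 2))| ≤ 1 := by
      rw [abs_of_nonneg (Real.exp_pos _).le]
      apply Real.exp_le_one_iff.2
      apply div_nonpos_of_nonpos_of_nonneg
      · simp [sq_nonneg]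
      · positivity
    have hz := hR p hp
    calc |u p| * |Real.exp (-(p.1 + τ0 * p.2 - lam) ^ 2 / (2 * σ ^ 2))| * |p.1 + τ0 * p.2|
        ≤ |u p| * 1 * max R 0 := by
          apply mul_le_mul
          · exact mul_le_mul_of_nonneg_left he (abs_nonneg _)
          · exact hz.trans (le_max_left _ _)
          · exact abs_nonneg _
          · positivity
      _ = ‖u p‖ * max R 0 := by rw [Real.norm_eq_abs]; ring
  have hsplit : (fun p => u p * Pw'' τ0 σ lam p) = fun p =>
      (Real.sqrt (2 * Real.pi) * σ ^ 3)⁻¹ *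
        (u p * Real.exp (-(p.1 + τ0 * p.2 - lam) ^ 2 / (2 * σ ^ 2)) * |p.1 + τ0 * p.2|) -
      (lam / σ ^ 2) * (u p * Pw' τ0 σ lam p) := by
    funext p
    rw [pw''_split τ0 σ hσ lam p]
    ring
  rw [hsplit, integral_sub ((hint1.const_mul _)) (((stepA lam).1).const_mul _),
    integral_const_mul, integral_const_mul]
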